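/- Let P be a feedback family and Q a forward family with I(←P, →Q) < ∞, and write Π := ←P⊗ν_{0,n}. Then for every reversed pair (S, R) such that ←S⊗→R ≪ Π and ←P⊗→Q ≪ ←S⊗→R, one has ∫ log( d(←S⊗→R)/dΠ ) d(←P⊗→Q) ≤ I(←P, →Q), with equality if and only if ←S⊗→R = ←P⊗→Q. Consequently, I(←P, →Q) = sup over all such reversed pairs (S, R) of ∫ log( d(←S⊗→R)/dΠ ) d(←P⊗→Q), and the supremum is attained (on Polish spaces the joint ←P⊗→Q itself admits a reversed-pair factorization by successive disintegration in the order y_0, x_0, y_1, x_1, …). -/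

import Mathlib

open MeasureTheory ProbabilityTheory Filter
open scoped ENNReal NNReal

namespace PaperDI

lemma measurable_finSnoc {Z : ℕ → Type*} [∀ i, MeasurableSpace (Z i)] (k : ℕ) :
    Measurable (fun p : (∀ j : Fin k, Z j) × Z k =>
      (Fin.snoc p.1 p.2 : ∀ j : Fin (k + 1), Z j)) := by
  apply measurable_pi_lambda
  intro j
  induction j using Fin.lastCases with
  | last => simpa using measurable_snd
  | cast i =>
    first
    | (simp only [Fin.snoc_castSucc]; exact (measurable_pi_apply i).comp measurable_fst)
    | (simp; exact (measurable_pi_apply i).comp measurable_fst)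

/-- Restriction of a prefix of length `k+1` to the prefix of length `k`. -/
def restr {Z : ℕ → Type*} (k : ℕ) (z : ∀ j : Fin (k + 1), Z j) : ∀ j : Fin k, Z j :=
  fun j => z j.castSucc

lemma measurable_restr {Z : ℕ → Type*} [∀ i, MeasurableSpace (Z i)] (k : ℕ) :
    Measurable (restr (Z := Z) k) :=
  measurable_pi_lambda _ fun _ => measurable_pi_apply _

variable (X Y : ℕ → Type*) [∀ i, MeasurableSpace (X i)] [∀ i, MeasurableSpace (Y i)]

/-- A feedback family `(p_0, …, p_n)`: `p_0` is a probability measure on `X_0` (a Markov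
kernel from the one-point space of empty prefixes) and `p_i` is a Markov kernel from
`X_{0,i-1} × Y_{0,i-1}` to `X_i`. -/
structure FeedbackFamily (n : ℕ) where
  p : ∀ i : Fin (n + 1), Kernel ((∀ j : Fin (i : ℕ), X j) × (∀ j : Fin (i : ℕ), Y j)) (X i)
  markov : ∀ i, IsMarkovKernel (p i)

/-- A forward family `(q_0, …, q_n)`: `q_i` is a Markov kernel from
`Y_{0,i-1} × X_{0,i}` to `Y_i`. -/
structure ForwardFamily (n : ℕ) where
  q : ∀ i : Fin (n + 1), Kernel ((∀ j : Fin (i : ℕ), Y j) × (∀ j : Fin ((i : ℕ) + 1), X j)) (Y i)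
  markov : ∀ i, IsMarkovKernel (q i)

variable {X Y} {n : ℕ}

/-- The causally conditioned kernel `←P_{0,k}` from `Y_{0,k-1}` to `X_{0,k}`. -/
noncomputable def back (P : FeedbackFamily X Y n) :
    (k : ℕ) → k ≤ n → Kernel (∀ j : Fin k, Y j) (∀ j : Fin (k + 1), X j)
  | 0, _ =>
      Kernel.map ((P.p ⟨0, Nat.succ_pos n⟩).comap (fun _ => default) measurable_const)
        (fun x0 => (Fin.snoc default x0 : ∀ j : Fin 1, X j))
  | (k + 1), h =>
      Kernel.map
        (((back P k (by omega)).comap (restr k) (measurable_restr k)) ⊗ₖ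
          ((P.p ⟨k + 1, by omega⟩).comap
            (fun t : (∀ j : Fin (k + 1), Y j) × (∀ j : Fin (k + 1), X j) => (t.2, t.1))
            (measurable_snd.prodMk measurable_fst)))
        (fun t : (∀ j : Fin (k + 1), X j) × X (k + 1) =>
          (Fin.snoc t.1 t.2 : ∀ j : Fin (k + 2), X j))

/-- The causally conditioned kernel `→Q_{0,k}` from `X_{0,k}` to `Y_{0,k}`. -/
noncomputable def fwd (Q : ForwardFamily X Y n) :
    (k : ℕ) → k ≤ n → Kernel (∀ j : Fin (k + 1), X j) (∀ j : Fin (k + 1), Y j)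
  | 0, _ =>
      Kernel.map ((Q.q ⟨0, Nat.succ_pos n⟩).comap (fun x => (default, x))
          (measurable_const.prodMk measurable_id))
        (fun y0 => (Fin.snoc default y0 : ∀ j : Fin 1, Y j))
  | (k + 1), h =>
      Kernel.map
        (((fwd Q k (by omega)).comap (restr (k + 1)) (measurable_restr (k + 1))) ⊗ₖ
          ((Q.q ⟨k + 1, by omega⟩).comap
            (fun t : (∀ j : Fin (k + 2), X j) × (∀ j : Fin (k + 1), Y j) => (t.2, t.1))
            (measurable_snd.prodMk measurable_fst)))
        (fun t : (∀ j : Fin (k + 1), Y j) × Y (k + 1) =>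
          (Fin.snoc t.1 t.2 : ∀ j : Fin (k + 2), Y j))

/-- The interleaved joint measure of `←P ⊗ →Q` on prefixes of length `k`. -/
noncomputable def jointAux (P : FeedbackFamily X Y n) (Q : ForwardFamily X Y n) :
    (k : ℕ) → k ≤ n + 1 → Measure ((∀ j : Fin k, X j) × (∀ j : Fin k, Y j))
  | 0, _ => Measure.dirac default
  | (k + 1), h =>
      let μ1 := (jointAux P Q k (by omega)) ⊗ₘ (P.p ⟨k, by omega⟩)
      let μ2 := μ1.map
          (fun t : ((∀ j : Fin k, X j) × (∀ j : Fin k, Y j)) × X k =>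
            (t.1.2, (Fin.snoc t.1.1 t.2 : ∀ j : Fin (k + 1), X j)))
      let μ3 := μ2 ⊗ₘ (Q.q ⟨k, by omega⟩)
      μ3.map
          (fun t : ((∀ j : Fin k, Y j) × (∀ j : Fin (k + 1), X j)) × Y k =>
            (t.1.2, (Fin.snoc t.1.1 t.2 : ∀ j : Fin (k + 1), Y j)))

/-- The joint measure `←P ⊗ →Q` on `X_{0,n} × Y_{0,n}`. -/
noncomputable def joint (P : FeedbackFamily X Y n) (Q : ForwardFamily X Y n) :
    Measure ((∀ j : Fin (n + 1), X j) × (∀ j : Fin (n + 1), Y j)) :=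
  jointAux P Q (n + 1) le_rfl

/-- The marginal `ν_{0,n}` of `←P ⊗ →Q` on `Y_{0,n}`. -/
noncomputable def nu (P : FeedbackFamily X Y n) (Q : ForwardFamily X Y n) :
    Measure (∀ j : Fin (n + 1), Y j) :=
  (joint P Q).map Prod.snd

/-- The measure `←P ⊗ λ` on `X_{0,n} × Y_{0,n}`, i.e. the measure
`←P_{0,n}(dx^n | y^{n-1}) ⊗ λ(dy^n)`. -/
noncomputable def backProd (P : FeedbackFamily X Y n) (lam : Measure (∀ j : Fin (n + 1), Y j)) :
    Measure ((∀ j : Fin (n + 1), X j) × (∀ j : Fin (n + 1), Y j)) :=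
  (lam ⊗ₘ ((back P n le_rfl).comap (restr n) (measurable_restr n))).map Prod.swap

open Classical in
/-- Kullback-Leibler divergence (relative entropy) `D(μ ‖ ν)`, with the convention
`D(μ ‖ ν) = ∞` when absolute continuity fails. -/
noncomputable def KL {Z : Type*} [MeasurableSpace Z] (μ ν : Measure Z) : ℝ≥0∞ :=
  if μ ≪ ν ∧ Integrable (llr μ ν) μ then ENNReal.ofReal (∫ z, llr μ ν z ∂μ) else ⊤

/-- Directed information `I(←P, →Q) = D(←P ⊗ →Q ‖ ←P ⊗ ν_{0,n})`. -/
noncomputable def DI (P : FeedbackFamily X Y n) (Q : ForwardFamily X Y n) : ℝ≥0∞ :=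
  KL (joint P Q) (backProd P (nu P Q))

/-- Weak convergence of a sequence of measures: integrals of every bounded continuous
real-valued function converge. -/
def WeakTendsto {Z : Type*} [MeasurableSpace Z] [TopologicalSpace Z]
    (μ : ℕ → Measure Z) (μ0 : Measure Z) : Prop :=
  ∀ f : BoundedContinuousFunction Z ℝ,
    Tendsto (fun α => ∫ z, f z ∂(μ α)) atTop (nhds (∫ z, f z ∂μ0))

/-- Uniform tightness of a family of measures. -/
def UniformlyTight {Z : Type*} [MeasurableSpace Z] [TopologicalSpace Z]
    (M : Set (Measure Z)) : Prop :=
  ∀ ε : ℝ≥0∞, 0 < ε → ∃ K : Set Z, IsCompact K ∧ ∀ μ ∈ M, 1 - ε ≤ μ K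

/-- The marginal `π_i` of `←P ⊗ →Q` on `X_{0,i} × Y_{0,i-1}`. -/
noncomputable def margin (P : FeedbackFamily X Y n) (Q : ForwardFamily X Y n) (i : Fin (n + 1)) :
    Measure ((∀ j : Fin ((i : ℕ) + 1), X j) × (∀ j : Fin (i : ℕ), Y j)) :=
  (joint P Q).map (fun t =>
    ((fun j : Fin ((i : ℕ) + 1) => t.1 (Fin.castLE i.isLt j)),
     (fun j : Fin (i : ℕ) => t.2 (Fin.castLE i.isLt.le j))))

/-- The iterated product measure of a tuple of kernels `(λ_0, …, λ_n)`,
`λ_i : Y_{0,i-1} → Y_i`, on prefixes of length `k`. -/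
noncomputable def chain {Z : ℕ → Type*} [∀ i, MeasurableSpace (Z i)] {n : ℕ}
    (lam : ∀ i : Fin (n + 1), Kernel (∀ j : Fin (i : ℕ), Z j) (Z i)) :
    (k : ℕ) → k ≤ n + 1 → Measure (∀ j : Fin k, Z j)
  | 0, _ => Measure.dirac default
  | (k + 1), h =>
      ((chain lam k (by omega)) ⊗ₘ (lam ⟨k, by omega⟩)).map
        (fun t : (∀ j : Fin k, Z j) × Z k => (Fin.snoc t.1 t.2 : ∀ j : Fin (k + 1), Z j))

/-- The joint measure `←S ⊗ →R` on `X_{0,n} × Y_{0,n}` determined by a reversed pair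
`(S, R)`; a reversed pair is formally a feedback family and a forward family with the
roles of `X` and `Y` interchanged. -/
noncomputable def revJoint (S : FeedbackFamily Y X n) (R : ForwardFamily Y X n) :
    Measure ((∀ j : Fin (n + 1), X j) × (∀ j : Fin (n + 1), Y j)) :=
  (joint S R).map Prod.swap

/-- `∫ log(dσ/dπ) dμ`, as an extended real number (integral of the positive part minus
integral of the negative part). -/
noncomputable def elogInt {Z : Type*} [MeasurableSpace Z] (σ π μ : Measure Z) : EReal :=
  ((∫⁻ z, ENNReal.ofReal (llr σ π z) ∂μ : ℝ≥0∞) : EReal) -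
    ((∫⁻ z, ENNReal.ofReal (-llr σ π z) ∂μ : ℝ≥0∞) : EReal)

/-- `∫ |log(dμ/dν)| dμ`. -/
noncomputable def absKL {Z : Type*} [MeasurableSpace Z] (μ ν : Measure Z) : ℝ≥0∞ :=
  ∫⁻ z, ENNReal.ofReal |llr μ ν z| ∂μ

section Topology

variable [∀ i, TopologicalSpace (X i)] [∀ i, TopologicalSpace (Y i)]

/-- Condition (CA): each `p_i` is weakly (Feller) continuous in the conditioning
variables `(x^{i-1}, y^{i-1})`. -/
def CondCA (P : FeedbackFamily X Y n) : Prop :=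
  ∀ (i : Fin (n + 1)) (g : BoundedContinuousFunction (X i) ℝ),
    Continuous (fun t : (∀ j : Fin (i : ℕ), X j) × (∀ j : Fin (i : ℕ), Y j) =>
      ∫ x, g x ∂(P.p i t))

/-- Condition (CB): each `q_i` is weakly (Feller) continuous in the conditioning
variables `(x^i, y^{i-1})`. -/
def CondCB (Q : ForwardFamily X Y n) : Prop :=
  ∀ (i : Fin (n + 1)) (g : BoundedContinuousFunction (Y i) ℝ),
    Continuous (fun t : (∀ j : Fin ((i : ℕ) + 1), X j) × (∀ j : Fin (i : ℕ), Y j) =>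
      ∫ y, g y ∂(Q.q i (t.2, t.1)))

end Topology


/-! ### Auxiliary analytic lemmas -/

section LogIneq

lemma log_key {t : ℝ} (ht : 0 < t) : 1 - t⁻¹ ≤ Real.log t := by
  have h := Real.add_one_le_exp (-Real.log t)
  rw [Real.exp_neg, Real.exp_log ht] at h
  linarith

lemma log_key_eq {t : ℝ} (ht : 0 < t) (h : Real.log t = 1 - t⁻¹) : t = 1 := by
  by_contra hne
  have hlog : Real.log t ≠ 0 := by
    intro h0
    rcases (Real.log_eq_zero).mp h0 with h1 | h1 | h1 <;> [linarith; exact hne h1; linarith]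
  have h2 := Real.add_one_lt_exp (neg_ne_zero.mpr hlog)
  rw [Real.exp_neg, Real.exp_log ht] at h2
  linarith

end LogIneq

section Analytic

variable {Z : Type*} [MeasurableSpace Z] {μ ν σ π : Measure Z}

lemma mul_inv_self_le_one (a : ℝ≥0∞) : a * a⁻¹ ≤ 1 := by
  rcases eq_or_ne a 0 with h0 | h0
  · simp [h0]
  rcases eq_or_ne a ∞ with ht | ht
  · simp [ht]
  · rw [ENNReal.mul_inv_cancel h0 ht]

lemma lintegral_inv_rnDeriv_le [IsFiniteMeasure μ] [IsFiniteMeasure ν] (h : μ ≪ ν) :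
    ∫⁻ z, (μ.rnDeriv ν z)⁻¹ ∂μ ≤ ν Set.univ := by
  have key : ∫⁻ z, (μ.rnDeriv ν z)⁻¹ ∂(ν.withDensity (μ.rnDeriv ν)) ≤ ν Set.univ := by
    rw [lintegral_withDensity_eq_lintegral_mul ν (Measure.measurable_rnDeriv μ ν)
      (g := fun z => (μ.rnDeriv ν z)⁻¹) (Measure.measurable_rnDeriv μ ν).inv]
    calc ∫⁻ z, (μ.rnDeriv ν z * (μ.rnDeriv ν z)⁻¹) ∂ν ≤ ∫⁻ _, 1 ∂ν :=
          lintegral_mono fun z => mul_inv_self_le_one _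
      _ = ν Set.univ := by simp
  rwa [Measure.withDensity_rnDeriv_eq μ ν h] at key

lemma ae_pos_lt_top [IsFiniteMeasure μ] [SigmaFinite ν] (h : μ ≪ ν) :
    ∀ᵐ z ∂μ, 0 < μ.rnDeriv ν z ∧ μ.rnDeriv ν z < ∞ :=
  (Measure.rnDeriv_pos h).and ((Measure.rnDeriv_lt_top μ ν).filter_mono h.ae_le)

lemma lintegral_ofReal_inv_toReal [IsFiniteMeasure μ] [SigmaFinite ν] (h : μ ≪ ν) :
    ∫⁻ z, ENNReal.ofReal ((μ.rnDeriv ν z).toReal)⁻¹ ∂μ = ∫⁻ z, (μ.rnDeriv ν z)⁻¹ ∂μ := by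
  refine lintegral_congr_ae ?_
  filter_upwards [ae_pos_lt_top h] with z hz
  rw [ENNReal.ofReal_inv_of_pos (ENNReal.toReal_pos hz.1.ne' hz.2.ne),
    ENNReal.ofReal_toReal hz.2.ne]

lemma integrable_inv_toReal_rnDeriv [IsProbabilityMeasure μ] [IsProbabilityMeasure ν]
    (h : μ ≪ ν) : Integrable (fun z => ((μ.rnDeriv ν z).toReal)⁻¹) μ := by
  refine ⟨((Measure.measurable_rnDeriv μ ν).ennreal_toReal.inv).aestronglyMeasurable, ?_⟩
  rw [hasFiniteIntegral_iff_ofReal (Eventually.of_forall fun z => by positivity)]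
  rw [lintegral_ofReal_inv_toReal h]
  exact lt_of_le_of_lt (lintegral_inv_rnDeriv_le h) (by simp)

lemma integral_inv_toReal_rnDeriv_le [IsProbabilityMeasure μ] [IsProbabilityMeasure ν]
    (h : μ ≪ ν) : ∫ z, ((μ.rnDeriv ν z).toReal)⁻¹ ∂μ ≤ 1 := by
  rw [integral_eq_lintegral_of_nonneg_ae (f := fun z => ((μ.rnDeriv ν z).toReal)⁻¹)
    (Eventually.of_forall fun z => by positivity)
    ((Measure.measurable_rnDeriv μ ν).ennreal_toReal.inv).aestronglyMeasurable,
    lintegral_ofReal_inv_toReal h]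
  have h1 : ∫⁻ z, (μ.rnDeriv ν z)⁻¹ ∂μ ≤ 1 := by
    simpa using lintegral_inv_rnDeriv_le h
  calc (∫⁻ z, (μ.rnDeriv ν z)⁻¹ ∂μ).toReal ≤ (1 : ℝ≥0∞).toReal :=
        ENNReal.toReal_mono ENNReal.one_ne_top h1
    _ = 1 := by simp

lemma llr_ge_ae [IsFiniteMeasure μ] [SigmaFinite ν] (h : μ ≪ ν) :
    ∀ᵐ z ∂μ, 1 - ((μ.rnDeriv ν z).toReal)⁻¹ ≤ llr μ ν z := by
  filter_upwards [ae_pos_lt_top h] with z hz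
  exact log_key (ENNReal.toReal_pos hz.1.ne' hz.2.ne)

/-- Gibbs' inequality together with the equality case. -/
lemma gibbs [IsProbabilityMeasure μ] [IsProbabilityMeasure ν] (h : μ ≪ ν)
    (hi : Integrable (llr μ ν) μ) :
    0 ≤ ∫ z, llr μ ν z ∂μ ∧ ((∫ z, llr μ ν z ∂μ) = 0 → μ = ν) := by
  have hint_inv := integrable_inv_toReal_rnDeriv h
  have hg_int : Integrable (fun z => 1 - ((μ.rnDeriv ν z).toReal)⁻¹) μ :=
    (integrable_const 1).sub hint_inv
  have hg_le := llr_ge_ae h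
  have hmono := integral_mono_ae hg_int hi hg_le
  have hsub : ∫ z, (1 - ((μ.rnDeriv ν z).toReal)⁻¹) ∂μ
      = 1 - ∫ z, ((μ.rnDeriv ν z).toReal)⁻¹ ∂μ := by
    rw [integral_sub (integrable_const 1) hint_inv]
    simp
  have hone := integral_inv_toReal_rnDeriv_le h
  rw [hsub] at hmono
  constructor
  · linarith
  · intro hz
    have hdiff_int : Integrable
        (fun z => llr μ ν z - (1 - ((μ.rnDeriv ν z).toReal)⁻¹)) μ := hi.sub hg_int
    have hdiff_nonneg : 0 ≤ᵐ[μ] fun z => llr μ ν z - (1 - ((μ.rnDeriv ν z).toReal)⁻¹) := by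
      filter_upwards [hg_le] with z hz2; simp; linarith
    have hdiff_nonneg' : 0 ≤ ∫ z, (llr μ ν z - (1 - ((μ.rnDeriv ν z).toReal)⁻¹)) ∂μ :=
      integral_nonneg_of_ae hdiff_nonneg
    have hdiff_int_eq : ∫ z, (llr μ ν z - (1 - ((μ.rnDeriv ν z).toReal)⁻¹)) ∂μ
        = - (1 - ∫ z, ((μ.rnDeriv ν z).toReal)⁻¹ ∂μ) := by
      rw [integral_sub hi hg_int, hz, hsub]; ring
    have hinv_one : ∫ z, ((μ.rnDeriv ν z).toReal)⁻¹ ∂μ = 1 := by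
      rw [hdiff_int_eq] at hdiff_nonneg'; linarith
    have hdiff_zero : ∫ z, (llr μ ν z - (1 - ((μ.rnDeriv ν z).toReal)⁻¹)) ∂μ = 0 := by
      rw [hdiff_int_eq, hinv_one]; ring
    have hae : (fun z => llr μ ν z - (1 - ((μ.rnDeriv ν z).toReal)⁻¹)) =ᵐ[μ] 0 :=
      (integral_eq_zero_iff_of_nonneg_ae hdiff_nonneg hdiff_int).mp hdiff_zero
    have hfone : μ.rnDeriv ν =ᵐ[μ] 1 := by
      filter_upwards [hae, ae_pos_lt_top h] with z h1 h2
      have h1' : llr μ ν z - (1 - ((μ.rnDeriv ν z).toReal)⁻¹) = 0 := h1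
      have ht : (μ.rnDeriv ν z).toReal = 1 := by
        apply log_key_eq (ENNReal.toReal_pos h2.1.ne' h2.2.ne)
        simp only [llr_def] at h1' ⊢
        linarith
      simpa [ENNReal.toReal_eq_one_iff] using ht
    have hlinv_one : ∫⁻ z, (μ.rnDeriv ν z)⁻¹ ∂μ = 1 := by
      rw [integral_eq_lintegral_of_nonneg_ae (f := fun z => ((μ.rnDeriv ν z).toReal)⁻¹)
    (Eventually.of_forall fun z => by positivity)
        ((Measure.measurable_rnDeriv μ ν).ennreal_toReal.inv).aestronglyMeasurable,
        lintegral_ofReal_inv_toReal h] at hinv_one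
      have hne : ∫⁻ z, (μ.rnDeriv ν z)⁻¹ ∂μ ≠ ∞ :=
        (lt_of_le_of_lt (lintegral_inv_rnDeriv_le h) (by simp)).ne
      rw [← ENNReal.ofReal_toReal hne, hinv_one]; simp
    have hwd : ν.withDensity (μ.rnDeriv ν) = μ := Measure.withDensity_rnDeriv_eq μ ν h
    have hlint : ∫⁻ z, μ.rnDeriv ν z * (μ.rnDeriv ν z)⁻¹ ∂ν = 1 := by
      have h0 := lintegral_withDensity_eq_lintegral_mul ν (Measure.measurable_rnDeriv μ ν)
        (Measure.measurable_rnDeriv μ ν).inv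
      rw [hwd] at h0
      exact h0.symm.trans hlinv_one
    have hmul_one : ∀ᵐ z ∂ν, μ.rnDeriv ν z * (μ.rnDeriv ν z)⁻¹ = 1 := by
      have hmeas : Measurable fun z => μ.rnDeriv ν z * (μ.rnDeriv ν z)⁻¹ :=
        (Measure.measurable_rnDeriv μ ν).mul (Measure.measurable_rnDeriv μ ν).inv
      have hle : ∀ z, μ.rnDeriv ν z * (μ.rnDeriv ν z)⁻¹ ≤ 1 := fun z => mul_inv_self_le_one _
      have hsub2 : ∫⁻ z, (1 - μ.rnDeriv ν z * (μ.rnDeriv ν z)⁻¹) ∂ν = 0 := by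
        rw [lintegral_sub hmeas (by rw [hlint]; exact ENNReal.one_ne_top)
          (Eventually.of_forall hle), hlint]
        simp
      have h3 := (lintegral_eq_zero_iff ((measurable_const).sub hmeas)).mp hsub2
      filter_upwards [h3] with z hz2
      have hz3 : (1 : ℝ≥0∞) - μ.rnDeriv ν z * (μ.rnDeriv ν z)⁻¹ = 0 := hz2
      exact le_antisymm (hle z) (tsub_eq_zero_iff_le.mp hz3)
    have hνpos : ∀ᵐ z ∂ν, μ.rnDeriv ν z ≠ 0 := by
      filter_upwards [hmul_one] with z hz2 h0
      rw [h0] at hz2; simp at hz2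
    have hE : MeasurableSet {z | μ.rnDeriv ν z ≠ 1} :=
      ((Measure.measurable_rnDeriv μ ν) (measurableSet_singleton 1)).compl
    have hμE : μ {z | μ.rnDeriv ν z ≠ 1} = 0 := by
      rw [EventuallyEq, ae_iff] at hfone
      simpa using hfone
    have hνE : ∀ᵐ z ∂ν, z ∈ {z | μ.rnDeriv ν z ≠ 1} → μ.rnDeriv ν z = 0 := by
      have h1 : ∫⁻ z in {z | μ.rnDeriv ν z ≠ 1}, μ.rnDeriv ν z ∂ν = 0 := by
        rw [← withDensity_apply _ hE, hwd]; exact hμE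
      have h2 := (lintegral_eq_zero_iff (Measure.measurable_rnDeriv μ ν)).mp h1
      exact (ae_restrict_iff' hE).mp h2
    have hfone' : μ.rnDeriv ν =ᵐ[ν] 1 := by
      filter_upwards [hνE, hνpos] with z h1 h2
      by_contra hne
      exact h2 (h1 hne)
    rw [← hwd, withDensity_congr_ae hfone', withDensity_one]

lemma llr_chain [IsProbabilityMeasure μ] [IsProbabilityMeasure σ] [IsProbabilityMeasure π]
    (hμσ : μ ≪ σ) (hσπ : σ ≪ π) :
    llr μ π =ᵐ[μ] fun z => llr μ σ z + llr σ π z := by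
  have hμπ : μ ≪ π := hμσ.trans hσπ
  have hmul := Measure.rnDeriv_mul_rnDeriv (κ := π) hμσ
  filter_upwards [hμπ.ae_le hmul, ae_pos_lt_top hμσ,
    hμσ.ae_le ((Measure.rnDeriv_pos hσπ).and
      ((Measure.rnDeriv_lt_top σ π).filter_mono hσπ.ae_le))] with z h1 h2 h3
  have h1' : μ.rnDeriv σ z * σ.rnDeriv π z = μ.rnDeriv π z := h1
  simp only [llr_def, ← h1', ENNReal.toReal_mul]
  rw [Real.log_mul (ENNReal.toReal_pos h2.1.ne' h2.2.ne).ne'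
    (ENNReal.toReal_pos h3.1.ne' h3.2.ne).ne']

lemma lintegral_ofReal_neg_llr_le [IsProbabilityMeasure μ] [IsProbabilityMeasure ν]
    (h : μ ≪ ν) : ∫⁻ z, ENNReal.ofReal (-(llr μ ν z)) ∂μ ≤ 1 := by
  have h1 : ∫⁻ z, ENNReal.ofReal (-(llr μ ν z)) ∂μ ≤ ∫⁻ z, (μ.rnDeriv ν z)⁻¹ ∂μ := by
    refine lintegral_mono_ae ?_
    filter_upwards [ae_pos_lt_top h] with z hz
    have ht : 0 < (μ.rnDeriv ν z).toReal := ENNReal.toReal_pos hz.1.ne' hz.2.ne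
    have hlog : -(llr μ ν z) ≤ ((μ.rnDeriv ν z).toReal)⁻¹ := by
      have := log_key ht
      simp only [llr_def]
      linarith
    calc ENNReal.ofReal (-(llr μ ν z)) ≤ ENNReal.ofReal ((μ.rnDeriv ν z).toReal)⁻¹ :=
          ENNReal.ofReal_le_ofReal hlog
      _ = (μ.rnDeriv ν z)⁻¹ := by
          rw [ENNReal.ofReal_inv_of_pos ht, ENNReal.ofReal_toReal hz.2.ne]
  refine h1.trans ?_
  simpa using lintegral_inv_rnDeriv_le h

/-- The abstract variational bound: for probability measures `μ ≪ σ ≪ π` with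
`llr μ π` integrable, `∫ log(dσ/dπ) dμ ≤ ∫ log(dμ/dπ) dμ`, with equality iff `σ = μ`. -/
lemma abstract_max [IsProbabilityMeasure μ] [IsProbabilityMeasure σ] [IsProbabilityMeasure π]
    (hσπ : σ ≪ π) (hμσ : μ ≪ σ) (hμπ : μ ≪ π) (hint : Integrable (llr μ π) μ) :
    elogInt σ π μ ≤ ((∫ z, llr μ π z ∂μ : ℝ) : EReal) ∧
      (elogInt σ π μ = ((∫ z, llr μ π z ∂μ : ℝ) : EReal) ↔ σ = μ) := by
  have hchain := llr_chain hμσ hσπ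
  have hchain' : llr σ π =ᵐ[μ] fun z => llr μ π z - llr μ σ z := by
    filter_upwards [hchain] with z hz
    have hz' : llr μ π z = llr μ σ z + llr σ π z := hz
    show llr σ π z = llr μ π z - llr μ σ z
    linarith
  have h2 : ∫⁻ z, ENNReal.ofReal |llr μ π z| ∂μ < ∞ := by
    have hfi := hint.2
    rw [hasFiniteIntegral_iff_norm] at hfi
    simpa [Real.norm_eq_abs] using hfi
  have hP : ∫⁻ z, ENNReal.ofReal (llr σ π z) ∂μ < ∞ := by
    have hb : ∫⁻ z, ENNReal.ofReal (llr σ π z) ∂μ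
        ≤ ∫⁻ z, (ENNReal.ofReal |llr μ π z| + ENNReal.ofReal (-(llr μ σ z))) ∂μ := by
      refine lintegral_mono_ae ?_
      filter_upwards [hchain'] with z hz
      rw [hz]
      calc ENNReal.ofReal (llr μ π z - llr μ σ z)
          ≤ ENNReal.ofReal (|llr μ π z| + (-(llr μ σ z))) := by
            refine ENNReal.ofReal_le_ofReal ?_
            have := le_abs_self (llr μ π z); linarith
        _ ≤ _ := ENNReal.ofReal_add_le
    have h3 := lintegral_ofReal_neg_llr_le hμσ
    calc ∫⁻ z, ENNReal.ofReal (llr σ π z) ∂μ ≤ _ := hb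
      _ = ∫⁻ z, ENNReal.ofReal |llr μ π z| ∂μ + ∫⁻ z, ENNReal.ofReal (-(llr μ σ z)) ∂μ :=
          lintegral_add_left ((measurable_llr μ π).abs.ennreal_ofReal) _
      _ < ∞ := ENNReal.add_lt_top.mpr ⟨h2, lt_of_le_of_lt h3 (by simp)⟩
  rcases eq_or_ne (∫⁻ z, ENNReal.ofReal (-(llr σ π z)) ∂μ) ∞ with hN | hN
  · have hbot : elogInt σ π μ = ⊥ := by
      rw [elogInt, hN, EReal.coe_ennreal_top, EReal.sub_top]
    have hne : σ ≠ μ := by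
      intro hσμ
      subst hσμ
      exact absurd hN (ne_top_of_le_ne_top h2.ne
        (lintegral_mono fun z => ENNReal.ofReal_le_ofReal (neg_le_abs _)))
    rw [hbot]
    exact ⟨bot_le, ⟨fun habs => absurd habs.symm (EReal.coe_ne_bot _), fun h => absurd h hne⟩⟩
  · have hIσ : Integrable (llr σ π) μ := by
      refine ⟨(measurable_llr σ π).aestronglyMeasurable, ?_⟩
      rw [hasFiniteIntegral_iff_norm]
      have hsplit : ∀ z, ENNReal.ofReal ‖llr σ π z‖
          ≤ ENNReal.ofReal (llr σ π z) + ENNReal.ofReal (-(llr σ π z)) := by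
        intro z
        rw [Real.norm_eq_abs]
        rcases le_total (llr σ π z) 0 with hc | hc
        · rw [abs_of_nonpos hc]; exact le_add_self
        · rw [abs_of_nonneg hc]; exact le_self_add
      calc ∫⁻ z, ENNReal.ofReal ‖llr σ π z‖ ∂μ
          ≤ ∫⁻ z, (ENNReal.ofReal (llr σ π z) + ENNReal.ofReal (-(llr σ π z))) ∂μ :=
            lintegral_mono hsplit
        _ = ∫⁻ z, ENNReal.ofReal (llr σ π z) ∂μ + ∫⁻ z, ENNReal.ofReal (-(llr σ π z)) ∂μ :=
            lintegral_add_left ((measurable_llr σ π).ennreal_ofReal) _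
        _ < ∞ := ENNReal.add_lt_top.mpr ⟨hP, hN.lt_top⟩
    have hrepr := integral_eq_lintegral_pos_part_sub_lintegral_neg_part hIσ
    have helog : elogInt σ π μ = ((∫ z, llr σ π z ∂μ : ℝ) : EReal) := by
      rw [elogInt, ← ENNReal.ofReal_toReal hP.ne, ← ENNReal.ofReal_toReal hN,
        EReal.coe_ennreal_ofReal, EReal.coe_ennreal_ofReal,
        max_eq_left ENNReal.toReal_nonneg, max_eq_left ENNReal.toReal_nonneg,
        ← EReal.coe_sub]
      exact congrArg _ hrepr.symm
    have hIμσ : Integrable (llr μ σ) μ := by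
      refine (hint.sub hIσ).congr ?_
      filter_upwards [hchain'] with z hz
      have hz' : llr σ π z = llr μ π z - llr μ σ z := hz
      show llr μ π z - llr σ π z = llr μ σ z
      linarith
    have hsum : ∫ z, llr μ π z ∂μ = ∫ z, llr μ σ z ∂μ + ∫ z, llr σ π z ∂μ := by
      rw [integral_congr_ae hchain, integral_add hIμσ hIσ]
    have hgibbs := gibbs hμσ hIμσ
    constructor
    · rw [helog]
      exact EReal.coe_le_coe_iff.mpr (by linarith [hgibbs.1])
    · rw [helog, EReal.coe_eq_coe_iff]
      constructor
      · intro he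
        exact (hgibbs.2 (by linarith)).symm
      · intro hσμ
        subst hσμ
        rfl

end Analytic

/-! ### Probability and Markov instances -/

section Instances

variable {X Y : ℕ → Type*} [∀ i, MeasurableSpace (X i)] [∀ i, MeasurableSpace (Y i)] {n : ℕ}

lemma measurable_jointMap1 (k : ℕ) :
    Measurable (fun t : ((∀ j : Fin k, X j) × (∀ j : Fin k, Y j)) × X k =>
      (t.1.2, (Fin.snoc t.1.1 t.2 : ∀ j : Fin (k + 1), X j))) :=
  (measurable_fst.snd).prodMk
    ((measurable_finSnoc k).comp (measurable_fst.fst.prodMk measurable_snd))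

lemma measurable_jointMap2 (k : ℕ) :
    Measurable (fun t : ((∀ j : Fin k, Y j) × (∀ j : Fin (k + 1), X j)) × Y k =>
      (t.1.2, (Fin.snoc t.1.1 t.2 : ∀ j : Fin (k + 1), Y j))) :=
  (measurable_fst.snd).prodMk
    ((measurable_finSnoc k).comp (measurable_fst.fst.prodMk measurable_snd))

lemma jointAux_succ (P : FeedbackFamily X Y n) (Q : ForwardFamily X Y n) (k : ℕ)
    (h : k + 1 ≤ n + 1) :
    jointAux P Q (k + 1) h =
      ((jointAux P Q k (by omega) ⊗ₘ P.p ⟨k, by omega⟩).map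
          (fun t : ((∀ j : Fin k, X j) × (∀ j : Fin k, Y j)) × X k =>
            (t.1.2, (Fin.snoc t.1.1 t.2 : ∀ j : Fin (k + 1), X j))) ⊗ₘ
        Q.q ⟨k, by omega⟩).map
        (fun t : ((∀ j : Fin k, Y j) × (∀ j : Fin (k + 1), X j)) × Y k =>
          (t.1.2, (Fin.snoc t.1.1 t.2 : ∀ j : Fin (k + 1), Y j))) := by
  rw [jointAux]

lemma isProb_jointAux (P : FeedbackFamily X Y n) (Q : ForwardFamily X Y n) :
    ∀ (k : ℕ) (hk : k ≤ n + 1), IsProbabilityMeasure (jointAux P Q k hk)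
  | 0, _ => by rw [jointAux]; infer_instance
  | (k + 1), hk => by
      have hkn : k ≤ n + 1 := by omega
      have hkn' : k < n + 1 := by omega
      haveI := isProb_jointAux P Q k hkn
      haveI := P.markov ⟨k, hkn'⟩
      haveI := Q.markov ⟨k, hkn'⟩
      rw [jointAux_succ]
      haveI h1 : IsProbabilityMeasure ((jointAux P Q k hkn) ⊗ₘ (P.p ⟨k, hkn'⟩)) :=
        inferInstance
      haveI h2 : IsProbabilityMeasure (((jointAux P Q k hkn) ⊗ₘ
          (P.p ⟨k, hkn'⟩)).map
          (fun t : ((∀ j : Fin k, X j) × (∀ j : Fin k, Y j)) × X k =>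
            (t.1.2, (Fin.snoc t.1.1 t.2 : ∀ j : Fin (k + 1), X j)))) :=
        Measure.isProbabilityMeasure_map (measurable_jointMap1 k).aemeasurable
      exact Measure.isProbabilityMeasure_map (measurable_jointMap2 k).aemeasurable

lemma isProb_joint (P : FeedbackFamily X Y n) (Q : ForwardFamily X Y n) :
    IsProbabilityMeasure (joint P Q) :=
  isProb_jointAux P Q (n + 1) le_rfl

lemma isProb_nu (P : FeedbackFamily X Y n) (Q : ForwardFamily X Y n) :
    IsProbabilityMeasure (nu P Q) := by
  haveI := isProb_joint P Q
  exact Measure.isProbabilityMeasure_map measurable_snd.aemeasurable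

lemma isMarkov_back (P : FeedbackFamily X Y n) :
    ∀ (k : ℕ) (hk : k ≤ n), IsMarkovKernel (back P k hk)
  | 0, _ => by
      haveI := P.markov ⟨0, Nat.succ_pos n⟩
      rw [back]
      exact Kernel.IsMarkovKernel.map _
        ((measurable_finSnoc 0).comp (measurable_const.prodMk measurable_id))
  | (k + 1), hk => by
      haveI := isMarkov_back P k (by omega)
      haveI := P.markov ⟨k + 1, by omega⟩
      rw [back]
      exact Kernel.IsMarkovKernel.map _ (measurable_finSnoc (k + 1))

lemma isProb_backProd (P : FeedbackFamily X Y n) (lam : Measure (∀ j : Fin (n + 1), Y j))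
    [IsProbabilityMeasure lam] : IsProbabilityMeasure (backProd P lam) := by
  haveI := isMarkov_back P n le_rfl
  exact Measure.isProbabilityMeasure_map measurable_swap.aemeasurable

lemma isProb_revJoint (S : FeedbackFamily Y X n) (R : ForwardFamily Y X n) :
    IsProbabilityMeasure (revJoint S R) := by
  haveI := isProb_joint S R
  exact Measure.isProbabilityMeasure_map measurable_swap.aemeasurable

lemma nonempty_of_markov {A B : Type*} [MeasurableSpace A] [MeasurableSpace B]
    (κ : Kernel A B) [IsMarkovKernel κ] (a : A) : Nonempty B := by
  by_contra h
  rw [not_nonempty_iff] at h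
  have h1 : (κ a) Set.univ = 1 := measure_univ
  rw [Set.univ_eq_empty_iff.mpr h, measure_empty] at h1
  exact zero_ne_one h1

lemma nonempty_pair (P : FeedbackFamily X Y n) (Q : ForwardFamily X Y n) :
    ∀ (k : ℕ), k ≤ n + 1 → Nonempty ((∀ j : Fin k, X j) × (∀ j : Fin k, Y j))
  | 0, _ => ⟨default⟩
  | (k + 1), hk => by
      have hkn : k ≤ n + 1 := by omega
      have hkn' : k < n + 1 := by omega
      obtain ⟨x, y⟩ := (nonempty_pair P Q k hkn).some
      haveI := P.markov ⟨k, hkn'⟩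
      obtain ⟨xk⟩ := nonempty_of_markov (P.p ⟨k, hkn'⟩) (x, y)
      haveI := Q.markov ⟨k, hkn'⟩
      obtain ⟨yk⟩ := nonempty_of_markov (Q.q ⟨k, hkn'⟩) (y, Fin.snoc x xk)
      exact ⟨(Fin.snoc x xk, Fin.snoc y yk)⟩

lemma nonemptyX (P : FeedbackFamily X Y n) (Q : ForwardFamily X Y n) (i : Fin (n + 1)) :
    Nonempty (X (i : ℕ)) := by
  obtain ⟨x, _⟩ := (nonempty_pair P Q (n + 1) le_rfl).some
  exact ⟨x i⟩

lemma nonemptyY (P : FeedbackFamily X Y n) (Q : ForwardFamily X Y n) (i : Fin (n + 1)) :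
    Nonempty (Y (i : ℕ)) := by
  obtain ⟨_, y⟩ := (nonempty_pair P Q (n + 1) le_rfl).some
  exact ⟨y i⟩

lemma measurable_prefix {Z : ℕ → Type*} [∀ i, MeasurableSpace (Z i)] {m k : ℕ} (h : k ≤ m) :
    Measurable (fun z : ∀ j : Fin m, Z j => fun j : Fin k => z (Fin.castLE h j)) :=
  measurable_pi_lambda _ fun _ => measurable_pi_apply _

lemma snoc_prefix {Z : ℕ → Type*} {m k : ℕ} (h1 : k ≤ m) (h2 : k < m) (h3 : k + 1 ≤ m)
    (z : ∀ j : Fin m, Z j) :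
    (Fin.snoc (fun j : Fin k => z (Fin.castLE h1 j)) (z ⟨k, h2⟩) : ∀ j : Fin (k + 1), Z j)
      = fun j : Fin (k + 1) => z (Fin.castLE h3 j) := by
  funext j
  induction j using Fin.lastCases with
  | last =>
      rw [Fin.snoc_last]
      rfl
  | cast i =>
      rw [Fin.snoc_castSucc]
      rfl

end Instances

/-! ### Conditional kernels without a nonemptiness assumption -/

section CK

variable {α Ω : Type*} [MeasurableSpace α] [MeasurableSpace Ω] [StandardBorelSpace Ω]

open Classical in
noncomputable def cK (ρ : Measure (α × Ω)) [IsFiniteMeasure ρ] : Kernel α Ω :=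
  if h : Nonempty Ω then haveI := h; ρ.condKernel else 0

lemma cK_eq (ρ : Measure (α × Ω)) [IsFiniteMeasure ρ] (h : Nonempty Ω) :
    cK ρ = (haveI := h; ρ.condKernel) := dif_pos h

lemma cK_markov (ρ : Measure (α × Ω)) [IsFiniteMeasure ρ] (h : Nonempty Ω) :
    IsMarkovKernel (cK ρ) := by
  haveI := h
  rw [cK_eq ρ h]
  infer_instance

lemma cK_disintegrate (ρ : Measure (α × Ω)) [IsFiniteMeasure ρ] (h : Nonempty Ω) :
    ρ.fst ⊗ₘ cK ρ = ρ := by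
  haveI := h
  rw [cK_eq ρ h]
  exact ρ.disintegrate ρ.condKernel

end CK

/-! ### The canonical reversed pair attaining the supremum -/

section Construct

variable {X Y : ℕ → Type*} {n : ℕ}
  [∀ i, TopologicalSpace (X i)] [∀ i, MeasurableSpace (X i)] [∀ i, BorelSpace (X i)]
  [∀ i, PolishSpace (X i)]
  [∀ i, TopologicalSpace (Y i)] [∀ i, MeasurableSpace (Y i)] [∀ i, BorelSpace (Y i)]
  [∀ i, PolishSpace (Y i)]

variable (P : FeedbackFamily X Y n) (Q : ForwardFamily X Y n)

/-- Marginal of the joint on `(y^{i-1}, x^{i-1}, y_i)`. -/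
noncomputable def margA (i : Fin (n + 1)) :
    Measure (((∀ j : Fin (i : ℕ), Y j) × (∀ j : Fin (i : ℕ), X j)) × Y (i : ℕ)) :=
  (joint P Q).map (fun t =>
    (((fun j : Fin (i : ℕ) => t.2 (Fin.castLE i.isLt.le j)),
      (fun j : Fin (i : ℕ) => t.1 (Fin.castLE i.isLt.le j))), t.2 i))

lemma measurable_margAMap (i : Fin (n + 1)) :
    Measurable (fun t : (∀ j : Fin (n + 1), X j) × (∀ j : Fin (n + 1), Y j) =>
      (((fun j : Fin (i : ℕ) => t.2 (Fin.castLE i.isLt.le j)),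
        (fun j : Fin (i : ℕ) => t.1 (Fin.castLE i.isLt.le j))), t.2 i)) :=
  (((measurable_prefix i.isLt.le).comp measurable_snd).prodMk
    ((measurable_prefix i.isLt.le).comp measurable_fst)).prodMk
    ((measurable_pi_apply i).comp measurable_snd)

lemma isProb_margA (i : Fin (n + 1)) : IsProbabilityMeasure (margA P Q i) := by
  haveI := isProb_joint P Q
  exact Measure.isProbabilityMeasure_map (measurable_margAMap (X := X) (Y := Y) i).aemeasurable

/-- Marginal of the joint on `(x^{i-1}, y^i, x_i)`. -/
noncomputable def margC (i : Fin (n + 1)) :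
    Measure (((∀ j : Fin (i : ℕ), X j) × (∀ j : Fin ((i : ℕ) + 1), Y j)) × X (i : ℕ)) :=
  (joint P Q).map (fun t =>
    (((fun j : Fin (i : ℕ) => t.1 (Fin.castLE i.isLt.le j)),
      (fun j : Fin ((i : ℕ) + 1) => t.2 (Fin.castLE i.isLt j))), t.1 i))

lemma measurable_margCMap (i : Fin (n + 1)) :
    Measurable (fun t : (∀ j : Fin (n + 1), X j) × (∀ j : Fin (n + 1), Y j) =>
      (((fun j : Fin (i : ℕ) => t.1 (Fin.castLE i.isLt.le j)),
        (fun j : Fin ((i : ℕ) + 1) => t.2 (Fin.castLE i.isLt j))), t.1 i)) :=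
  (((measurable_prefix i.isLt.le).comp measurable_fst).prodMk
    ((measurable_prefix i.isLt).comp measurable_snd)).prodMk
    ((measurable_pi_apply i).comp measurable_fst)

lemma isProb_margC (i : Fin (n + 1)) : IsProbabilityMeasure (margC P Q i) := by
  haveI := isProb_joint P Q
  exact Measure.isProbabilityMeasure_map (measurable_margCMap (X := X) (Y := Y) i).aemeasurable

/-- The reversed feedback family obtained by disintegrating the joint measure. -/
noncomputable def revS : FeedbackFamily Y X n where
  p i := (letI := isProb_margA P Q i; cK (margA P Q i))
  markov i := by
    letI := isProb_margA P Q i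
    exact cK_markov _ (nonemptyY P Q i)

/-- The reversed forward family obtained by disintegrating the joint measure. -/
noncomputable def revR : ForwardFamily Y X n where
  q i := (letI := isProb_margC P Q i; cK (margC P Q i))
  markov i := by
    letI := isProb_margC P Q i
    exact cK_markov _ (nonemptyX P Q i)

/-- The swapped prefix projection. -/
def prefixPairSwap (k : ℕ) (hk : k ≤ n + 1) :
    ((∀ j : Fin (n + 1), X j) × (∀ j : Fin (n + 1), Y j))
      → ((∀ j : Fin k, Y j) × (∀ j : Fin k, X j)) :=
  fun t => ((fun j => t.2 (Fin.castLE hk j)), (fun j => t.1 (Fin.castLE hk j)))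

lemma measurable_prefixPairSwap (k : ℕ) (hk : k ≤ n + 1) :
    Measurable (prefixPairSwap (X := X) (Y := Y) k hk) :=
  ((measurable_prefix hk).comp measurable_snd).prodMk
    ((measurable_prefix hk).comp measurable_fst)

lemma rev_jointAux_eq :
    ∀ (k : ℕ) (hk : k ≤ n + 1),
      jointAux (revS P Q) (revR P Q) k hk = (joint P Q).map (prefixPairSwap k hk)
  | 0, hk => by
      haveI := isProb_joint P Q
      rw [jointAux]
      have h0 : prefixPairSwap (X := X) (Y := Y) 0 hk = fun _ => default := by
        funext t
        exact Subsingleton.elim _ _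
      rw [h0, Measure.map_const, measure_univ, one_smul]
  | (k + 1), hk => by
      haveI := isProb_joint P Q
      letI := isProb_margA P Q ⟨k, hk⟩
      letI := isProb_margC P Q ⟨k, hk⟩
      have hk' : k ≤ n + 1 := by omega
      have e1 : jointAux (revS P Q) (revR P Q) k hk' ⊗ₘ (revS P Q).p ⟨k, hk⟩
          = margA P Q ⟨k, hk⟩ := by
        have h := rev_jointAux_eq k hk'
        have hfst : (joint P Q).map (prefixPairSwap k hk') = (margA P Q ⟨k, hk⟩).fst :=
          (Measure.map_map measurable_fst (measurable_margAMap (X := X) (Y := Y) ⟨k, hk⟩)).symm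
        rw [h, hfst]
        exact cK_disintegrate _ (nonemptyY P Q ⟨k, hk⟩)
      have e2 : (margA P Q ⟨k, hk⟩).map
          (fun t : ((∀ j : Fin k, Y j) × (∀ j : Fin k, X j)) × Y k =>
            (t.1.2, (Fin.snoc t.1.1 t.2 : ∀ j : Fin (k + 1), Y j)))
          = (margC P Q ⟨k, hk⟩).fst := by
        have h1 : (margA P Q ⟨k, hk⟩).map
            (fun t : ((∀ j : Fin k, Y j) × (∀ j : Fin k, X j)) × Y k =>
              (t.1.2, (Fin.snoc t.1.1 t.2 : ∀ j : Fin (k + 1), Y j)))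
            = (joint P Q).map
              ((fun t : ((∀ j : Fin k, Y j) × (∀ j : Fin k, X j)) × Y k =>
                (t.1.2, (Fin.snoc t.1.1 t.2 : ∀ j : Fin (k + 1), Y j))) ∘
              (fun t =>
                (((fun j : Fin k => t.2 (Fin.castLE (Nat.le_of_lt hk) j)),
                  (fun j : Fin k => t.1 (Fin.castLE (Nat.le_of_lt hk) j))), t.2 ⟨k, hk⟩))) :=
          Measure.map_map (measurable_jointMap1 (X := Y) (Y := X) k)
            (measurable_margAMap (X := X) (Y := Y) ⟨k, hk⟩)
        have h2 : (margC P Q ⟨k, hk⟩).fst = (joint P Q).map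
            (Prod.fst ∘ (fun t : (∀ j : Fin (n + 1), X j) × (∀ j : Fin (n + 1), Y j) =>
              (((fun j : Fin k => t.1 (Fin.castLE (Nat.le_of_lt hk) j)),
                (fun j : Fin (k + 1) => t.2 (Fin.castLE hk j))), t.1 ⟨k, hk⟩))) :=
          Measure.map_map measurable_fst (measurable_margCMap (X := X) (Y := Y) ⟨k, hk⟩)
        rw [h1, h2]
        refine congrArg (fun f => (joint P Q).map f) ?_
        funext t
        exact Prod.ext rfl (snoc_prefix _ _ _ t.2)
      have e3 : (margC P Q ⟨k, hk⟩).fst ⊗ₘ (revR P Q).q ⟨k, hk⟩ = margC P Q ⟨k, hk⟩ :=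
        cK_disintegrate _ (nonemptyX P Q ⟨k, hk⟩)
      have e4 : (margC P Q ⟨k, hk⟩).map
          (fun t : ((∀ j : Fin k, X j) × (∀ j : Fin (k + 1), Y j)) × X k =>
            (t.1.2, (Fin.snoc t.1.1 t.2 : ∀ j : Fin (k + 1), X j)))
          = (joint P Q).map (prefixPairSwap (k + 1) hk) := by
        have h1 : (margC P Q ⟨k, hk⟩).map
            (fun t : ((∀ j : Fin k, X j) × (∀ j : Fin (k + 1), Y j)) × X k =>
              (t.1.2, (Fin.snoc t.1.1 t.2 : ∀ j : Fin (k + 1), X j)))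
            = (joint P Q).map
              ((fun t : ((∀ j : Fin k, X j) × (∀ j : Fin (k + 1), Y j)) × X k =>
                (t.1.2, (Fin.snoc t.1.1 t.2 : ∀ j : Fin (k + 1), X j))) ∘
              (fun t =>
                (((fun j : Fin k => t.1 (Fin.castLE (Nat.le_of_lt hk) j)),
                  (fun j : Fin (k + 1) => t.2 (Fin.castLE hk j))), t.1 ⟨k, hk⟩))) :=
          Measure.map_map (measurable_jointMap2 (X := Y) (Y := X) k)
            (measurable_margCMap (X := X) (Y := Y) ⟨k, hk⟩)
        rw [h1]
        refine congrArg (fun f => (joint P Q).map f) ?_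
        funext t
        exact Prod.ext rfl (snoc_prefix _ _ _ t.1)
      rw [jointAux_succ, e1, e2, e3, e4]

lemma revJoint_eq : revJoint (revS P Q) (revR P Q) = joint P Q := by
  rw [revJoint, joint, rev_jointAux_eq P Q (n + 1) le_rfl,
    Measure.map_map measurable_swap (measurable_prefixPairSwap (n + 1) le_rfl)]
  have hid : (Prod.swap ∘ prefixPairSwap (X := X) (Y := Y) (n + 1) le_rfl) = id := by
    funext t
    refine Prod.ext ?_ ?_ <;> rfl
  rw [hid, Measure.map_id]

end Construct

section Statements

variable {X Y : ℕ → Type*} {n : ℕ}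
  [∀ i, TopologicalSpace (X i)] [∀ i, MeasurableSpace (X i)] [∀ i, BorelSpace (X i)]
  [∀ i, PolishSpace (X i)]
  [∀ i, TopologicalSpace (Y i)] [∀ i, MeasurableSpace (Y i)] [∀ i, BorelSpace (Y i)]
  [∀ i, PolishSpace (Y i)]

/-- Variational equality (maximization) over reversed pairs: for every
reversed pair `(S, R)` with `←S⊗→R ≪ Π := ←P⊗ν` and `←P⊗→Q ≪ ←S⊗→R`, the integral
`∫ log(d(←S⊗→R)/dΠ) d(←P⊗→Q)` is at most `I(←P,→Q)`, with equality iff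
`←S⊗→R = ←P⊗→Q`; consequently `I(←P,→Q)` is the (attained) supremum over all such
reversed pairs. -/
theorem directedInfo_variational_max
    (P : FeedbackFamily X Y n) (Q : ForwardFamily X Y n) (hfin : DI P Q < ⊤) :
    (∀ (S : FeedbackFamily Y X n) (R : ForwardFamily Y X n),
      revJoint S R ≪ backProd P (nu P Q) → joint P Q ≪ revJoint S R →
        elogInt (revJoint S R) (backProd P (nu P Q)) (joint P Q) ≤ (DI P Q : EReal) ∧
          (elogInt (revJoint S R) (backProd P (nu P Q)) (joint P Q) = (DI P Q : EReal) ↔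
            revJoint S R = joint P Q)) ∧
    ((DI P Q : EReal) = ⨆ (S : FeedbackFamily Y X n) (R : ForwardFamily Y X n)
        (_ : revJoint S R ≪ backProd P (nu P Q)) (_ : joint P Q ≪ revJoint S R),
        elogInt (revJoint S R) (backProd P (nu P Q)) (joint P Q)) ∧
    ∃ (S : FeedbackFamily Y X n) (R : ForwardFamily Y X n),
      revJoint S R ≪ backProd P (nu P Q) ∧ joint P Q ≪ revJoint S R ∧
        elogInt (revJoint S R) (backProd P (nu P Q)) (joint P Q) = (DI P Q : EReal) := by
  classical
  haveI := isProb_joint P Q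
  haveI := isProb_nu P Q
  haveI := isProb_backProd P (nu P Q)
  have hcond : joint P Q ≪ backProd P (nu P Q) ∧
      Integrable (llr (joint P Q) (backProd P (nu P Q))) (joint P Q) := by
    by_contra hc
    rw [DI, KL, if_neg hc] at hfin
    exact lt_irrefl _ hfin
  have hDI : DI P Q
      = ENNReal.ofReal (∫ z, llr (joint P Q) (backProd P (nu P Q)) z ∂(joint P Q)) := by
    rw [DI, KL, if_pos hcond]
  have hge := (gibbs hcond.1 hcond.2).1
  have hDIcoe : (DI P Q : EReal)
      = ((∫ z, llr (joint P Q) (backProd P (nu P Q)) z ∂(joint P Q) : ℝ) : EReal) := by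
    rw [hDI, EReal.coe_ennreal_ofReal, max_eq_left hge]
  have partA : ∀ (S : FeedbackFamily Y X n) (R : ForwardFamily Y X n),
      revJoint S R ≪ backProd P (nu P Q) → joint P Q ≪ revJoint S R →
        elogInt (revJoint S R) (backProd P (nu P Q)) (joint P Q) ≤ (DI P Q : EReal) ∧
          (elogInt (revJoint S R) (backProd P (nu P Q)) (joint P Q) = (DI P Q : EReal) ↔
            revJoint S R = joint P Q) := by
    intro S R h1 h2
    haveI := isProb_revJoint S R
    rw [hDIcoe]
    exact abstract_max h1 h2 hcond.1 hcond.2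
  have h1 : revJoint (revS P Q) (revR P Q) ≪ backProd P (nu P Q) := by
    rw [revJoint_eq]; exact hcond.1
  have h2 : joint P Q ≪ revJoint (revS P Q) (revR P Q) := by
    rw [revJoint_eq]
  have heq : elogInt (revJoint (revS P Q) (revR P Q)) (backProd P (nu P Q)) (joint P Q)
      = (DI P Q : EReal) := (partA _ _ h1 h2).2.mpr (revJoint_eq P Q)
  refine ⟨partA, ?_, ⟨revS P Q, revR P Q, h1, h2, heq⟩⟩
  apply le_antisymm
  · exact le_iSup_of_le (revS P Q) (le_iSup_of_le (revR P Q)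
      (le_iSup_of_le h1 (le_iSup_of_le h2 (le_of_eq heq.symm))))
  · exact iSup_le fun S => iSup_le fun R => iSup_le fun ha => iSup_le fun hb =>
      (partA S R ha hb).1


end Statements

end PaperDI
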